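/- The vanishing identity underlying wall-crossing cancellation: for nonnegative integers k_1(0), k_2(0), k_1(j), k_2(j) (j = 1,…,h) and rationals a^{\hat Q_j}, b^{\hat Q_j}, c^{\hat Q_j} with a+b+c = 1 for each j, and rationals a^{+r}, b^{+r}, c^{+r}, a^{+s}, b^{+s}, c^{+s} with a^{+r}+b^{+r}+c^{+r} = 1 = a^{+s}+b^{+s}+c^{+s}, the expression E := Σ_j [((k_2(0)+1)k_1(j)(k_1(0)+1)/(k_1(0)+k_1(j)) − (k_1(0)+1)k_2(j))a^{\hat Q_j} − (k_1(0)+1)k_2(j)((k_2(j)−1)/(k_2(0)+k_2(j)))b^{\hat Q_j} − (k_1(0)+1)k_2(j)c^{\hat Q_j}] − (k_2(0)+1)((k_1(0)+1)/(k_1(0)+r))(1+Σ_{i=0}^h k_1(i))a^{+r} + (k_1(0)+1)(1+Σ_{i=0}^h k_2(i))(a^{+s} + ((s−1)/(k_2(0)+s))b^{+s} + c^{+s}) vanishes whenever the relation (1+Σ_i k_1(i))/(k_1(0)+r)·a^{+r} + (1+Σ_i k_2(i))/(k_2(0)+s)·b^{+s} = 1 + Σ_j (k_1(j)/(k_1(0)+k_1(j))·a^{\hat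 Q_j} + k_2(j)/(k_2(0)+k_2(j))·b^{\hat Q_j}) holds (after substituting c = 1 − a − b everywhere). -/
import Mathlib


theorem stmt_14 (r s : ℕ) (hr : 2 ≤ r) (hs : 2 ≤ s) (h : ℕ)
    (k10 k20 : ℕ) (k1 k2 : Fin h → ℕ)
    (hden1 : ∀ j, 0 < k10 + k1 j) (hden2 : ∀ j, 0 < k20 + k2 j)
    (aQ bQ cQ : Fin h → ℚ) (hQ : ∀ j, aQ j + bQ j + cQ j = 1)
    (ar br cr asv bsv csv : ℚ)
    (hsum_r : ar + br + cr = 1) (hsum_s : asv + bsv + csv = 1)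
    (hrel :
      (1 + ((k10 : ℚ) + ∑ j, (k1 j : ℚ))) / ((k10 : ℚ) + (r : ℚ)) * ar +
          (1 + ((k20 : ℚ) + ∑ j, (k2 j : ℚ))) / ((k20 : ℚ) + (s : ℚ)) * bsv =
        1 + ∑ j, ((k1 j : ℚ) / ((k10 : ℚ) + (k1 j : ℚ)) * aQ j +
          (k2 j : ℚ) / ((k20 : ℚ) + (k2 j : ℚ)) * bQ j)) :
    (∑ j, ((((k20 : ℚ) + 1) * (k1 j : ℚ) * ((k10 : ℚ) + 1) / ((k10 : ℚ) + (k1 j : ℚ)) -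
            ((k10 : ℚ) + 1) * (k2 j : ℚ)) * aQ j -
          ((k10 : ℚ) + 1) * (k2 j : ℚ) * (((k2 j : ℚ) - 1) / ((k20 : ℚ) + (k2 j : ℚ))) * bQ j -
          ((k10 : ℚ) + 1) * (k2 j : ℚ) * cQ j)) -
        ((k20 : ℚ) + 1) * (((k10 : ℚ) + 1) / ((k10 : ℚ) + (r : ℚ))) *
          (1 + ((k10 : ℚ) + ∑ j, (k1 j : ℚ))) * ar +
        ((k10 : ℚ) + 1) * (1 + ((k20 : ℚ) + ∑ j, (k2 j : ℚ))) *
          (asv + (((s : ℚ) - 1) / ((k20 : ℚ) + (s : ℚ))) * bsv + csv) = 0 := by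
  have hA : (0:ℚ) < (k10:ℚ) + 1 := by positivity
  have hks : (0:ℚ) < (k20:ℚ) + (s:ℚ) := by
    have : (0:ℚ) < (s:ℚ) := by exact_mod_cast Nat.lt_of_lt_of_le (by norm_num) hs
    positivity
  have hkey : ∀ j ∈ Finset.univ (α := Fin h),
      ((((k20 : ℚ) + 1) * (k1 j : ℚ) * ((k10 : ℚ) + 1) / ((k10 : ℚ) + (k1 j : ℚ)) -
            ((k10 : ℚ) + 1) * (k2 j : ℚ)) * aQ j -
          ((k10 : ℚ) + 1) * (k2 j : ℚ) * (((k2 j : ℚ) - 1) / ((k20 : ℚ) + (k2 j : ℚ))) * bQ j -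
          ((k10 : ℚ) + 1) * (k2 j : ℚ) * cQ j) =
      ((k10:ℚ)+1)*((k20:ℚ)+1) * ((k1 j : ℚ) / ((k10 : ℚ) + (k1 j : ℚ)) * aQ j +
          (k2 j : ℚ) / ((k20 : ℚ) + (k2 j : ℚ)) * bQ j) - ((k10:ℚ)+1) * (k2 j : ℚ) := by
    intro j _
    have h1 : ((k10:ℚ) + (k1 j : ℚ)) ≠ 0 := by
      have : (0:ℚ) < (k10:ℚ) + (k1 j : ℚ) := by exact_mod_cast hden1 j
      linarith
    have h2 : ((k20:ℚ) + (k2 j : ℚ)) ≠ 0 := by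
      have : (0:ℚ) < (k20:ℚ) + (k2 j : ℚ) := by exact_mod_cast hden2 j
      linarith
    have hc : cQ j = 1 - aQ j - bQ j := by linarith [hQ j]
    rw [hc]
    field_simp
    ring
  rw [Finset.sum_congr rfl hkey, Finset.sum_sub_distrib, ← Finset.mul_sum, ← Finset.mul_sum]
  have hb : asv + (((s : ℚ) - 1) / ((k20 : ℚ) + (s : ℚ))) * bsv + csv =
      1 - ((k20:ℚ)+1) / ((k20 : ℚ) + (s : ℚ)) * bsv := by
    have hcs : csv = 1 - asv - bsv := by linarith
    rw [hcs]
    field_simp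
    ring
  rw [hb]
  linear_combination (-(((k10:ℚ)+1)*((k20:ℚ)+1))) * hrel
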